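/- Let f : ℝⁿ → ℝⁿ be of class C², let p ∈ ℝⁿ with f(p) = 0, let g_p(h) := f(p+h) − f(p) − Df_p(h), and let c_p > 0 denote the smallest nonzero singular value of Df_p. Suppose x ∈ ℝⁿ satisfies x − p ∈ (ker Df_p)^⊥ and ‖g_p(x−p)‖ / ‖Df_p(x−p)‖ < 1/2. Then (1/2)‖Df_p(x−p)‖ ≤ ‖f(x)‖ and consequently (c_p/2)‖x − p‖ ≤ ‖f(x)‖. -/

import Mathlib

open Set

/-- The smallest nonzero singular value of `A`, i.e. the infimum of `‖A v‖` over unit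
vectors `v` orthogonal to the kernel of `A`. -/
noncomputable def smallestPosSV {n : ℕ}
    (A : EuclideanSpace ℝ (Fin n) →L[ℝ] EuclideanSpace ℝ (Fin n)) : ℝ :=
  sInf {r : ℝ | ∃ v ∈ (LinearMap.ker A.toLinearMap)ᗮ, ‖v‖ = 1 ∧ r = ‖A v‖}

/-- Let `f` be `C²`, `f(p) = 0`, let `g_p(h) = f(p+h) − f(p) − Df_p h`,
and let `c_p > 0` be the smallest nonzero singular value of `Df_p`.  If
`x − p ∈ (ker Df_p)^⊥` and `‖g_p(x−p)‖/‖Df_p(x−p)‖ < 1/2`, then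
`(1/2)‖Df_p(x−p)‖ ≤ ‖f(x)‖` and `(c_p/2)‖x−p‖ ≤ ‖f(x)‖`. -/
theorem statement6
    (n : ℕ)
    (f : EuclideanSpace ℝ (Fin n) → EuclideanSpace ℝ (Fin n))
    (hf : ContDiff ℝ 2 f)
    (p : EuclideanSpace ℝ (Fin n)) (hfp : f p = 0)
    (cp : ℝ) (hcp : cp = smallestPosSV (fderiv ℝ f p)) (hcppos : 0 < cp)
    (x : EuclideanSpace ℝ (Fin n))
    (hx : x - p ∈ (LinearMap.ker (fderiv ℝ f p).toLinearMap)ᗮ)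
    (hratio : ‖f (p + (x - p)) - f p - fderiv ℝ f p (x - p)‖ / ‖fderiv ℝ f p (x - p)‖ < 1 / 2) :
    (1 / 2) * ‖fderiv ℝ f p (x - p)‖ ≤ ‖f x‖ ∧ (cp / 2) * ‖x - p‖ ≤ ‖f x‖ := by
  set A := fderiv ℝ f p with hA
  set v := x - p with hv
  have hxpv : p + v = x := by simp [hv]
  rw [hxpv, hfp] at hratio
  -- key: cp * ‖v‖ ≤ ‖A v‖
  have hkey : cp * ‖v‖ ≤ ‖A v‖ := by
    rcases eq_or_ne v 0 with h0 | h0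
    · simp [h0]
    · set u := ‖v‖⁻¹ • v with hu
      have hvn : ‖v‖ ≠ 0 := norm_ne_zero_iff.mpr h0
      have hun : ‖u‖ = 1 := by
        rw [hu, norm_smul, norm_inv, norm_norm, inv_mul_cancel₀ hvn]
      have humem : u ∈ (LinearMap.ker A.toLinearMap)ᗮ := Submodule.smul_mem _ _ hx
      have hmem : ‖A u‖ ∈ {r : ℝ | ∃ w ∈ (LinearMap.ker A.toLinearMap)ᗮ, ‖w‖ = 1 ∧ r = ‖A w‖} :=
        ⟨u, humem, hun, rfl⟩
      have hbdd : BddBelow {r : ℝ | ∃ w ∈ (LinearMap.ker A.toLinearMap)ᗮ, ‖w‖ = 1 ∧ r = ‖A w‖} :=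
        ⟨0, fun r ⟨w, _, _, hr⟩ => hr ▸ norm_nonneg _⟩
      have hle : cp ≤ ‖A u‖ := hcp ▸ csInf_le hbdd hmem
      have hAu : ‖A u‖ = ‖v‖⁻¹ * ‖A v‖ := by
        rw [hu, map_smul, norm_smul, norm_inv, norm_norm]
      rw [hAu] at hle
      have := mul_le_mul_of_nonneg_right hle (norm_nonneg v)
      calc cp * ‖v‖ ≤ ‖v‖⁻¹ * ‖A v‖ * ‖v‖ := this
        _ = ‖A v‖ := by field_simp
  rcases eq_or_ne (A v) 0 with hAv | hAv
  · -- then v ∈ ker, and v ∈ kerᗮ, so v = 0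
    have hker : v ∈ LinearMap.ker A.toLinearMap := hAv
    have hv0 : v = 0 := inner_self_eq_zero.mp (hx v hker)
    rw [hAv, hv0]
    simp [norm_nonneg]
  · have hAvpos : 0 < ‖A v‖ := norm_pos_iff.mpr hAv
    have hg : ‖f x - 0 - A v‖ < (1 / 2) * ‖A v‖ := by
      rw [div_lt_iff₀ hAvpos] at hratio
      linarith
    have h1 : (1 / 2) * ‖A v‖ ≤ ‖f x‖ := by
      have htri : ‖A v‖ ≤ ‖f x - 0 - A v‖ + ‖f x‖ := by
        have := norm_sub_le (f x - 0 - A v) (f x - 0)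
        simp only [sub_sub_cancel_left, norm_neg, sub_zero] at this ⊢
        calc ‖A v‖ = ‖f x - A v - f x‖ := by rw [show f x - A v - f x = -(A v) by abel]; simp
          _ ≤ ‖f x - A v‖ + ‖f x‖ := norm_sub_le _ _
      linarith
    refine ⟨h1, ?_⟩
    calc cp / 2 * ‖v‖ = (1/2) * (cp * ‖v‖) := by ring
      _ ≤ (1/2) * ‖A v‖ := by linarith [hkey]
      _ ≤ ‖f x‖ := h1
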